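/- Let u and v be rational unit vectors of the same colour with u ≠ -v. Then every rational unit vector x satisfying ⟪x, u⟫ = ⟪v, u⟫ has the same colour as u; that is, the circle {x on the sphere : ⟪x, u⟫ = ⟪v, u⟫} is monochromatic on rational points. -/

import Mathlib

open scoped RealInnerProductSpace

/-- The colour class of the rational unit vectors in `ℝ³` whose `i`-th reduced
integer coordinate is odd (red for `i = 0`, white for `i = 1`, black for
`i = 2`). -/
def colourClass (i : Fin 3) : Set (EuclideanSpace ℝ (Fin 3)) :=
  {y | ‖y‖ = 1 ∧ ∃ n : Fin 3 → ℤ, ∃ d : ℤ, 0 < d ∧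
    Int.gcd (Int.gcd (n 0) (n 1) : ℤ) (n 2) = 1 ∧
    (∀ j, y j = (n j : ℝ) / (d : ℝ)) ∧ Odd (n i)}

lemma cast2_one {m : ℤ} (h : m % 2 = 1) : (m : ZMod 2) = 1 := by
  obtain ⟨k, rfl⟩ : ∃ k, m = 2*k+1 := ⟨m/2, by omega⟩
  push_cast
  have h2 : (2:ZMod 2) = 0 := rfl
  rw [h2]; ring

lemma cast2_zero {m : ℤ} (h : m % 2 = 0) : (m : ZMod 2) = 0 := by
  obtain ⟨k, rfl⟩ : ∃ k, m = 2*k := ⟨m/2, by omega⟩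
  push_cast
  have h2 : (2:ZMod 2) = 0 := rfl
  rw [h2]; ring

lemma sq_mod4 (n : ℤ) : (n^2 % 4 = 0 ∧ n % 2 = 0) ∨ (n^2 % 4 = 1 ∧ n % 2 = 1) := by
  rcases Int.even_or_odd n with ⟨k, rfl⟩ | ⟨k, rfl⟩
  · have h : (k+k)^2 = 4*k^2 := by ring
    omega
  · have h : (2*k+1)^2 = 4*(k^2+k)+1 := by ring
    omega

lemma parity3 (a b c d : ℤ) (h : a^2+b^2+c^2 = d^2)
    (hg : Int.gcd (Int.gcd a b : ℤ) c = 1) :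
    d % 2 = 1 ∧ ((a%2=1 ∧ b%2=0 ∧ c%2=0) ∨ (a%2=0∧b%2=1∧c%2=0) ∨ (a%2=0∧b%2=0∧c%2=1)) := by
  have hne : ¬ (a%2=0 ∧ b%2=0 ∧ c%2=0) := by
    rintro ⟨ha, hb, hc⟩
    have h2 : (2:ℤ) ∣ (Int.gcd (Int.gcd a b : ℤ) c : ℤ) :=
      Int.dvd_coe_gcd (Int.dvd_coe_gcd (by omega) (by omega)) (by omega)
    rw [hg] at h2
    norm_num at h2
  rcases sq_mod4 a with ⟨ha1, ha2⟩|⟨ha1, ha2⟩ <;> rcases sq_mod4 b with ⟨hb1, hb2⟩|⟨hb1, hb2⟩ <;>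
    rcases sq_mod4 c with ⟨hc1, hc2⟩|⟨hc1, hc2⟩ <;> rcases sq_mod4 d with ⟨hd1, hd2⟩|⟨hd1, hd2⟩ <;>
    omega

lemma parities_of (i : Fin 3) (n : Fin 3 → ℤ) (d : ℤ) (h : (n 0)^2+(n 1)^2+(n 2)^2 = d^2)
    (hg : Int.gcd (Int.gcd (n 0) (n 1) : ℤ) (n 2) = 1) (hi : Odd (n i)) :
    d % 2 = 1 ∧ ∀ j, n j % 2 = if j = i then 1 else 0 := by
  obtain ⟨hd, hcase⟩ := parity3 _ _ _ _ h hg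
  rw [Int.odd_iff] at hi
  refine ⟨hd, fun j => ?_⟩
  fin_cases i <;> fin_cases j <;> simp_all <;> omega

lemma final_parity (i : Fin 3) (nx nu nv : Fin 3 → ℤ) (s dv : ℤ)
    (hso : s % 2 = 1) (hdvo : dv % 2 = 1)
    (hnui : nu i % 2 = 1) (hnuj : ∀ j, j ≠ i → nu j % 2 = 0)
    (hnvi : nv i % 2 = 1)
    (hint : dv * (nx 0 * nu 0 + nx 1 * nu 1 + nx 2 * nu 2)
      = s * (nv 0 * nu 0 + nv 1 * nu 1 + nv 2 * nu 2)) :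
    nx i % 2 = 1 := by
  have h2 := congrArg (fun z : ℤ => (z : ZMod 2)) hint
  push_cast at h2
  rw [cast2_one hso, cast2_one hdvo, one_mul, one_mul] at h2
  fin_cases i
  · have e0 : nu 0 % 2 = 1 := hnui
    have e1 : nu 1 % 2 = 0 := hnuj 1 (by decide)
    have e2 : nu 2 % 2 = 0 := hnuj 2 (by decide)
    have f0 : nv 0 % 2 = 1 := hnvi
    rw [cast2_one e0, cast2_zero e1, cast2_zero e2, cast2_one f0] at h2
    show nx 0 % 2 = 1
    rcases Int.emod_two_eq (nx 0) with hmod | hmod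
    · exfalso; rw [cast2_zero hmod] at h2; simp at h2
    · exact hmod
  · have e0 : nu 0 % 2 = 0 := hnuj 0 (by decide)
    have e1 : nu 1 % 2 = 1 := hnui
    have e2 : nu 2 % 2 = 0 := hnuj 2 (by decide)
    have f1 : nv 1 % 2 = 1 := hnvi
    rw [cast2_zero e0, cast2_one e1, cast2_zero e2, cast2_one f1] at h2
    show nx 1 % 2 = 1
    rcases Int.emod_two_eq (nx 1) with hmod | hmod
    · exfalso; rw [cast2_zero hmod] at h2; simp at h2
    · exact hmod
  · have e0 : nu 0 % 2 = 0 := hnuj 0 (by decide)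
    have e1 : nu 1 % 2 = 0 := hnuj 1 (by decide)
    have e2 : nu 2 % 2 = 1 := hnui
    have f2 : nv 2 % 2 = 1 := hnvi
    rw [cast2_zero e0, cast2_zero e1, cast2_one e2, cast2_one f2] at h2
    show nx 2 % 2 = 1
    rcases Int.emod_two_eq (nx 2) with hmod | hmod
    · exfalso; rw [cast2_zero hmod] at h2; simp at h2
    · exact hmod

lemma inner_expand (a b : EuclideanSpace ℝ (Fin 3)) :
    ⟪a,b⟫ = a 0 * b 0 + a 1 * b 1 + a 2 * b 2 := by
  simp [PiLp.inner_apply, RCLike.inner_apply, conj_trivial, Fin.sum_univ_three]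
  ring

lemma sum_sq_eq (y : EuclideanSpace ℝ (Fin 3)) (hy : ‖y‖ = 1) (m : Fin 3 → ℤ) (d : ℤ)
    (hd : 0 < d) (hrep : ∀ j, y j = (m j : ℝ) / (d : ℝ)) :
    (m 0)^2 + (m 1)^2 + (m 2)^2 = d^2 := by
  have hd0 : (d:ℝ) ≠ 0 := by exact_mod_cast hd.ne'
  have h1 : (y 0)^2 + (y 1)^2 + (y 2)^2 = 1 := by
    have h := EuclideanSpace.norm_eq y
    rw [hy] at h
    have h2 : ∑ j, ‖y j‖^2 = 1 := Real.sqrt_eq_one.mp h.symm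
    simpa [Real.norm_eq_abs, sq_abs, Fin.sum_univ_three] using h2
  rw [hrep 0, hrep 1, hrep 2] at h1
  have h3 : ((m 0)^2 + (m 1)^2 + (m 2)^2 : ℝ) = (d:ℝ)^2 := by
    field_simp at h1
    linarith
  exact_mod_cast h3

/-- Existence of a reduced rational representation for a rational unit vector. -/
lemma reduced_rep (y : EuclideanSpace ℝ (Fin 3)) (hy : ‖y‖ = 1)
    (hq : ∀ j, ∃ q : ℚ, y j = (q : ℝ)) :
    ∃ n : Fin 3 → ℤ, ∃ d : ℤ, 0 < d ∧
      Int.gcd (Int.gcd (n 0) (n 1) : ℤ) (n 2) = 1 ∧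
      (∀ j, y j = (n j : ℝ) / (d : ℝ)) := by
  choose q hqy using hq
  set D : ℤ := ((q 0).den * (q 1).den * (q 2).den : ℤ) with hD
  have hden : ∀ j, ((q j).den : ℤ) ≠ 0 := fun j => by
    exact_mod_cast (q j).den_nz
  have hDpos : 0 < D := by
    have := (q 0).pos; have := (q 1).pos; have := (q 2).pos
    positivity
  set m : Fin 3 → ℤ := ![(q 0).num * (q 1).den * (q 2).den,
    (q 1).num * (q 0).den * (q 2).den, (q 2).num * (q 0).den * (q 1).den] with hm
  have hrepm : ∀ j, y j = (m j : ℝ) / (D : ℝ) := by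
    intro j
    have hqc : ∀ k : Fin 3, (q k : ℝ) = ((q k).num : ℝ) / ((q k).den : ℝ) := fun k => by
      rw [Rat.cast_def]
    have hdr : ∀ k : Fin 3, ((q k).den : ℝ) ≠ 0 := fun k => by
      exact_mod_cast hden k
    fin_cases j <;>
      · rw [hqy, hqc]
        simp only [hm, hD]
        push_cast
        field_simp
  have hsum := sum_sq_eq y hy m D hDpos hrepm
  set g : ℕ := Int.gcd (Int.gcd (m 0) (m 1) : ℤ) (m 2) with hg
  have hgd0 : (g:ℤ) ∣ m 0 := (Int.gcd_dvd_left _ _).trans (Int.gcd_dvd_left _ _)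
  have hgd1 : (g:ℤ) ∣ m 1 := (Int.gcd_dvd_left _ _).trans (Int.gcd_dvd_right _ _)
  have hgd2 : (g:ℤ) ∣ m 2 := Int.gcd_dvd_right _ _
  have hgD : (g:ℤ) ∣ D := by
    have h2 : ((g:ℤ))^2 ∣ D^2 := by
      rw [← hsum]
      exact dvd_add (dvd_add (pow_dvd_pow_of_dvd hgd0 2) (pow_dvd_pow_of_dvd hgd1 2))
        (pow_dvd_pow_of_dvd hgd2 2)
    exact (Int.pow_dvd_pow_iff (two_ne_zero)).mp h2
  have hgpos : 0 < (g:ℤ) := by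
    rcases Nat.eq_zero_or_pos g with h0 | hpos
    · exfalso
      rw [hg, Int.gcd_eq_zero_iff] at h0
      obtain ⟨h01, h02⟩ := h0
      have h01' : Int.gcd (m 0) (m 1) = 0 := by exact_mod_cast h01
      rw [Int.gcd_eq_zero_iff] at h01'
      rw [h01'.1, h01'.2, h02] at hsum
      simp at hsum
      nlinarith [hsum, hDpos]
    · exact_mod_cast hpos
  obtain ⟨d, hd⟩ := hgD
  obtain ⟨n0, hn0⟩ := hgd0
  obtain ⟨n1, hn1⟩ := hgd1
  obtain ⟨n2, hn2⟩ := hgd2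
  set n : Fin 3 → ℤ := ![n0, n1, n2] with hn
  have hmn : ∀ j, m j = (g:ℤ) * n j := by
    intro j; fin_cases j <;> simpa [hn] using (by assumption : _)
  refine ⟨n, d, ?_, ?_, ?_⟩
  · nlinarith [hDpos, hd, hgpos]
  · have hgc : g = g * Int.gcd (Int.gcd (n 0) (n 1) : ℤ) (n 2) := by
      conv_lhs => rw [hg, hmn 0, hmn 1, hmn 2]
      rw [Int.gcd_mul_left, Int.natAbs_natCast, Nat.cast_mul, Int.gcd_mul_left,
        Int.natAbs_natCast]
    have hgne : 0 < g := by exact_mod_cast hgpos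
    exact (Nat.eq_of_mul_eq_mul_left hgne (by rw [mul_one]; exact hgc)).symm
  · intro j
    rw [hrepm j, hmn j, hd]
    have hgr : ((g:ℕ):ℝ) ≠ 0 := by
      exact_mod_cast (by exact_mod_cast hgpos : (0:ℝ) < (g:ℕ)).ne'
    push_cast
    rw [mul_div_mul_left _ _ hgr]

/-- If `u` and `v` are rational unit vectors of the same colour with `u ≠ -v`,
then the circle `{x : ⟪x, u⟫ = ⟪v, u⟫}` is monochromatic on rational points:
every rational unit vector on it has the same colour as `u`. -/
theorem circle_monochromatic (i : Fin 3) (u v : EuclideanSpace ℝ (Fin 3))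
    (hu : u ∈ colourClass i) (hv : v ∈ colourClass i) (huv : u ≠ -v)
    (x : EuclideanSpace ℝ (Fin 3)) (hx : ‖x‖ = 1)
    (hxq : ∀ j, ∃ q : ℚ, x j = (q : ℝ))
    (hxc : ⟪x, u⟫ = ⟪v, u⟫) :
    x ∈ colourClass i := by
  obtain ⟨hun, nu, du, hdu, hgu, hru, hou⟩ := hu
  obtain ⟨hvn, nv, dv, hdv, hgv, hrv, hov⟩ := hv
  obtain ⟨nx, s, hs, hgx, hrx⟩ := reduced_rep x hx hxq
  -- parities
  obtain ⟨hduo, hnup⟩ := parities_of i nu du (sum_sq_eq u hun nu du hdu hru) hgu hou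
  obtain ⟨hdvo, hnvp⟩ := parities_of i nv dv (sum_sq_eq v hvn nv dv hdv hrv) hgv hov
  obtain ⟨hso, _⟩ := parity3 _ _ _ _ (sum_sq_eq x hx nx s hs hrx) hgx
  -- clear denominators in the inner product equation
  have hsne : (s:ℝ) ≠ 0 := by exact_mod_cast hs.ne'
  have hdune : (du:ℝ) ≠ 0 := by exact_mod_cast hdu.ne'
  have hdvne : (dv:ℝ) ≠ 0 := by exact_mod_cast hdv.ne'
  rw [inner_expand, inner_expand, hrx 0, hrx 1, hrx 2, hru 0, hru 1, hru 2,
    hrv 0, hrv 1, hrv 2] at hxc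
  have hint : dv * (nx 0 * nu 0 + nx 1 * nu 1 + nx 2 * nu 2)
      = s * (nv 0 * nu 0 + nv 1 * nu 1 + nv 2 * nu 2) := by
    have hr : ((dv * (nx 0 * nu 0 + nx 1 * nu 1 + nx 2 * nu 2) : ℤ) : ℝ)
        = ((s * (nv 0 * nu 0 + nv 1 * nu 1 + nv 2 * nu 2) : ℤ) : ℝ) := by
      push_cast
      field_simp at hxc
      refine mul_right_cancel₀ hdune ?_
      linear_combination (du:ℝ) * hxc
    exact_mod_cast hr
  have hxodd : nx i % 2 = 1 := by
    refine final_parity i nx nu nv s dv hso hdvo ?_ ?_ ?_ hint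
    · simpa using hnup i
    · intro j hj; simpa [hj] using hnup j
    · simpa using hnvp i
  exact ⟨hx, nx, s, hs, hgx, hrx, Int.odd_iff.mpr hxodd⟩
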